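/- Let D_a be the distribution supported uniformly (by arc length) on the union of segments [vᵢ, vᵢ + (aᵢ - λ_a)u) labeled -1 and (vᵢ + (aᵢ + λ_a)u, vᵢ + u] labeled +1, for i = 1,…,d, where vᵢ = R eᵢ, u = (R/√d)Σⱼ eⱼ, λ_a = (r/R)(Σᵢ|1/√d + ā - aᵢ|^q)^{1/q}, and aᵢ > λ_a for all i. Then the linear classifier f_{w^a, 1} with w^a_i = 1/R - d aᵢ/(R√d + dR ā) has robust loss zero at radius r in the ℓ_p norm: every support point of D_a is correctly classified and lies at ℓ_p distance greater than r from the hyperplane ⟨w^a, z⟩ = 1. -/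

import Mathlib

open Finset
open scoped ENNReal

set_option maxHeartbeats 1000000 in
/-- For the distribution `D_a` supported on the segments
`[vᵢ, vᵢ + (aᵢ - λ_a)u)` (labeled `-1`) and `(vᵢ + (aᵢ + λ_a)u, vᵢ + u]` (labeled `+1`),
the linear classifier `f_{w^a, 1}` has robust loss zero at radius `r` in the ℓ_p norm:
every support point is correctly classified (negative points satisfy `⟨w^a, x⟩ < 1`,
positive points `⟨w^a, x⟩ ≥ 1`) and lies at ℓ_p distance greater than `r` from the
hyperplane `⟨w^a, z⟩ = 1`. -/
theorem Da_linearly_r_separated (d : ℕ) (hd : 1 ≤ d)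
    (p : ℝ≥0∞) [Fact (1 ≤ p)] (hp : 1 < p)
    (q : ℝ) (hq : 1 ≤ q) (hpq : 1 / p + 1 / ENNReal.ofReal q = 1)
    (R r : ℝ) (hR : 0 < R) (hr : 0 < r)
    (a : Fin d → ℝ) (ha : ∀ i, a i ∈ Set.Icc (0 : ℝ) 1)
    (abar : ℝ) (habar : abar = (1 / (d : ℝ)) * ∑ i, a i)
    (lam : ℝ)
    (hlam : lam = (r / R) * (∑ i, |1 / Real.sqrt d + abar - a i| ^ q) ^ (1 / q))
    (halam : ∀ i, lam < a i)
    (v : Fin d → Fin d → ℝ) (hv : ∀ i j, v i j = if j = i then R else 0)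
    (u : Fin d → ℝ) (hu : ∀ j, u j = R / Real.sqrt d)
    (w : Fin d → ℝ)
    (hw : ∀ i, w i = 1 / R - (d : ℝ) * a i / (R * Real.sqrt d + (d : ℝ) * R * abar)) :
    ∀ i : Fin d, ∀ s : ℝ,
      ((s ∈ Set.Ico (0 : ℝ) (a i - lam) →
        (∑ j, w j * (v i j + s * u j)) < 1 ∧
        r < Metric.infDist
          ((WithLp.equiv p (Fin d → ℝ)).symm (fun j => v i j + s * u j))
          {z : PiLp p (fun _ : Fin d => ℝ) |
            ∑ j, w j * (WithLp.equiv p (Fin d → ℝ)) z j = 1}) ∧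
      (s ∈ Set.Ioc (a i + lam) 1 →
        1 ≤ (∑ j, w j * (v i j + s * u j)) ∧
        r < Metric.infDist
          ((WithLp.equiv p (Fin d → ℝ)).symm (fun j => v i j + s * u j))
          {z : PiLp p (fun _ : Fin d => ℝ) |
            ∑ j, w j * (WithLp.equiv p (Fin d → ℝ)) z j = 1})) := by
  have hd0 : (0:ℝ) < d := by exact_mod_cast hd
  have hsd : 0 < Real.sqrt d := Real.sqrt_pos.mpr hd0
  have hss : Real.sqrt d * Real.sqrt d = (d:ℝ) := Real.mul_self_sqrt hd0.le
  have habar0 : 0 ≤ abar := by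
    rw [habar]
    have : 0 ≤ ∑ i, a i := Finset.sum_nonneg fun j _ => (ha j).1
    positivity
  have hden : 0 < Real.sqrt d + (d:ℝ) * abar := by positivity
  set c : ℝ := (d:ℝ) / (Real.sqrt d + (d:ℝ) * abar) with hc_def
  have hc : 0 < c := by positivity
  have hcR : 0 < c / R := by positivity
  set g : Fin d → ℝ := fun j => 1 / Real.sqrt d + abar - a j with hg_def
  have hwg : ∀ j, w j = (c / R) * g j := by
    intro j
    rw [hw j, hc_def, hg_def]
    show _ = (d:ℝ) / (Real.sqrt d + (d:ℝ) * abar) / R * (1 / Real.sqrt d + abar - a j)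
    field_simp
    ring_nf
    linear_combination hss
  have hsuma : ∑ j, a j = (d:ℝ) * abar := by
    rw [habar]; field_simp
  have hgsum : ∑ j, g j = Real.sqrt d := by
    simp only [hg_def]
    rw [Finset.sum_sub_distrib, Finset.sum_add_distrib, Finset.sum_const, Finset.card_univ,
      Fintype.card_fin, hsuma, nsmul_eq_mul]
    field_simp
    simp only [Finset.sum_const, Finset.card_univ, Fintype.card_fin, nsmul_eq_mul]
    linear_combination -hss
  have hc1 : c * (1 / Real.sqrt d + abar) = 1 := by
    rw [hc_def]
    field_simp
    linear_combination -hss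
  -- the affine formula for the inner product
  have hS : ∀ i : Fin d, ∀ s' : ℝ,
      ∑ j, w j * (v i j + s' * u j) = 1 + c * (s' - a i) := by
    intro i s'
    have expand : ∑ j, w j * (v i j + s' * u j)
        = (∑ j, w j * v i j) + s' * (R / Real.sqrt d) * ∑ j, w j := by
      rw [Finset.mul_sum]
      rw [← Finset.sum_add_distrib]
      apply Finset.sum_congr rfl
      intro j _
      rw [hu j]; ring
    have h1 : ∑ j, w j * v i j = w i * R := by
      have : ∀ j, w j * v i j = if j = i then w j * R else 0 := fun j => by
        rw [hv]; split <;> simp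
      rw [Finset.sum_congr rfl fun j _ => this j, Finset.sum_ite_eq' univ i (fun j => w j * R)]
      simp
    have h2 : ∑ j, w j = c * Real.sqrt d / R := by
      rw [Finset.sum_congr rfl fun j _ => hwg j, ← Finset.mul_sum, hgsum]; ring
    rw [expand, h1, h2, hwg i]
    have : c / R * g i * R = c * g i := by field_simp
    rw [this, hg_def]
    have hRd : s' * (R / Real.sqrt d) * (c * Real.sqrt d / R) = s' * c := by
      field_simp
    rw [hRd]
    show c * (1 / Real.sqrt d + abar - a i) + s' * c = 1 + c * (s' - a i)
    linear_combination hc1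
  set Gq : ℝ := (∑ j, |g j| ^ q) ^ (1 / q) with hGq_def
  have hlamG : lam = (r / R) * Gq := hlam
  have hq0 : q ≠ 0 := by linarith
  -- positivity of Gq
  obtain ⟨j0, hj0⟩ : ∃ j, g j ≠ 0 := by
    by_contra h
    push_neg at h
    have : ∑ j, g j = 0 := Finset.sum_eq_zero fun j _ => h j
    rw [hgsum] at this
    exact hsd.ne' this
  have hGqpos : 0 < Gq := by
    apply Real.rpow_pos_of_pos
    refine Finset.sum_pos' (fun j _ => Real.rpow_nonneg (abs_nonneg _) q) ?_
    exact ⟨j0, Finset.mem_univ _, Real.rpow_pos_of_pos (abs_pos.mpr hj0) q⟩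
  set Wq : ℝ := (∑ j, |w j| ^ q) ^ (1 / q) with hWq_def
  have hWqG : Wq = (c / R) * Gq := by
    have habsw : ∀ j, |w j| ^ q = (c/R)^q * |g j| ^ q := by
      intro j
      rw [hwg j, abs_mul, abs_of_pos hcR, Real.mul_rpow hcR.le (abs_nonneg _)]
    rw [hWq_def, Finset.sum_congr rfl fun j _ => habsw j, ← Finset.mul_sum,
      Real.mul_rpow (by positivity) (by positivity),
      ← Real.rpow_mul hcR.le, mul_one_div_cancel hq0, Real.rpow_one]
  have hWqpos : 0 < Wq := by rw [hWqG]; positivity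
  -- Hölder inequality for the weight w against PiLp p norm
  have hHolder : ∀ t : PiLp p (fun _ : Fin d => ℝ), |∑ j, w j * t j| ≤ Wq * ‖t‖ := by
    intro t
    have habs : |∑ j, w j * t j| ≤ ∑ j, |t j| * |w j| := by
      refine (Finset.abs_sum_le_sum_abs _ _).trans (le_of_eq ?_)
      exact Finset.sum_congr rfl fun j _ => by rw [abs_mul, mul_comm]
    rcases eq_or_ne p ⊤ with hptop | hptop
    · -- p = ∞, q = 1
      have hq1 : q = 1 := by
        rw [hptop] at hpq
        simp only [one_div, ENNReal.inv_top, zero_add, ENNReal.inv_eq_one] at hpq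
        have := ENNReal.toReal_eq_one_iff (ENNReal.ofReal q) |>.mpr hpq
        rwa [ENNReal.toReal_ofReal (by linarith)] at this
      have hWq1 : Wq = ∑ j, |w j| := by
        rw [hWq_def, hq1]
        simp [Real.rpow_one]
      have hbd : ∀ j, |t j| ≤ ‖t‖ := by
        intro j
        subst hptop
        rw [PiLp.norm_eq_ciSup]
        calc |t j| = ‖t j‖ := (Real.norm_eq_abs _).symm
          _ ≤ ⨆ i, ‖t i‖ :=
              le_ciSup (f := fun i => ‖t i‖) (Set.Finite.bddAbove (Set.finite_range _)) j
      calc |∑ j, w j * t j| ≤ ∑ j, |t j| * |w j| := habs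
        _ ≤ ∑ j, ‖t‖ * |w j| :=
            Finset.sum_le_sum fun j _ => mul_le_mul_of_nonneg_right (hbd j) (abs_nonneg _)
        _ = Wq * ‖t‖ := by rw [← Finset.mul_sum, hWq1]; ring
    · -- p finite
      have hpr1 : 1 < p.toReal := by
        refine (ENNReal.toReal_lt_toReal (by simp) hptop).mpr hp |>.trans_le' ?_
        simp
      have hconj : (p.toReal).HolderConjugate q := by
        rw [Real.holderConjugate_iff]
        constructor
        · exact hpr1
        · have h1 : (1 / p + 1 / ENNReal.ofReal q).toReal = (1:ℝ≥0∞).toReal := by rw [hpq]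
          have hpne0 : p ≠ 0 := by positivity
          have hqne0 : ENNReal.ofReal q ≠ 0 := by
            simp [ENNReal.ofReal_eq_zero]; linarith
          rw [ENNReal.toReal_add (by simp [hpne0]) (by simp [hqne0])] at h1
          simp only [one_div, ENNReal.toReal_inv, ENNReal.toReal_ofReal (by linarith : (0:ℝ) ≤ q),
            ENNReal.toReal_one] at h1
          exact h1
      have hnorm : ‖t‖ = (∑ j, |t j| ^ p.toReal) ^ (1 / p.toReal) := by
        rw [PiLp.norm_eq_sum (by linarith : 0 < p.toReal)]
        simp [Real.norm_eq_abs]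
      calc |∑ j, w j * t j| ≤ ∑ j, |t j| * |w j| := habs
        _ ≤ (∑ j, ‖t j‖ ^ p.toReal) ^ (1 / p.toReal) * (∑ j, ‖w j‖ ^ q) ^ (1 / q) := by
            have := Real.inner_le_Lp_mul_Lq univ (fun j => |t j|) (fun j => |w j|) hconj
            simpa [abs_abs, Real.norm_eq_abs] using this
        _ = Wq * ‖t‖ := by rw [hnorm, hWq_def]; simp [Real.norm_eq_abs, mul_comm]
  -- the hyperplane is nonempty
  have hwj0 : w j0 ≠ 0 := by rw [hwg j0]; exact mul_ne_zero hcR.ne' hj0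
  have hne : Set.Nonempty {z : PiLp p (fun _ : Fin d => ℝ) |
      ∑ j, w j * (WithLp.equiv p (Fin d → ℝ)) z j = 1} := by
    refine ⟨(WithLp.equiv p (Fin d → ℝ)).symm (fun k => if k = j0 then (w j0)⁻¹ else 0), ?_⟩
    simp only [Set.mem_setOf_eq, Equiv.apply_symm_apply, mul_ite, mul_zero]
    rw [Finset.sum_ite_eq' univ j0 (fun k => w k * (w j0)⁻¹)]
    simp [hwj0]
  -- distance lower bound
  have hdist : ∀ x : Fin d → ℝ, r * Wq < |(∑ j, w j * x j) - 1| →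
      r < Metric.infDist ((WithLp.equiv p (Fin d → ℝ)).symm x)
        {z : PiLp p (fun _ : Fin d => ℝ) |
          ∑ j, w j * (WithLp.equiv p (Fin d → ℝ)) z j = 1} := by
    intro x hx
    set X := (WithLp.equiv p (Fin d → ℝ)).symm x with hX_def
    by_contra hcon
    push_neg at hcon
    have hlt : Metric.infDist X {z : PiLp p (fun _ : Fin d => ℝ) |
        ∑ j, w j * (WithLp.equiv p (Fin d → ℝ)) z j = 1} < |(∑ j, w j * x j) - 1| / Wq := by
      refine lt_of_le_of_lt hcon ?_
      rw [lt_div_iff₀ hWqpos]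
      linarith [hx]
    obtain ⟨z, hz, hdz⟩ := (Metric.infDist_lt_iff hne).mp hlt
    have hzsum : ∑ j, w j * (WithLp.equiv p (Fin d → ℝ)) z j = 1 := hz
    have hXz : (∑ j, w j * x j) - 1 = ∑ j, w j * (X - z) j := by
      rw [← hzsum, ← Finset.sum_sub_distrib]
      refine Finset.sum_congr rfl fun j _ => ?_
      have h1 : (X - z) j = x j - (WithLp.equiv p (Fin d → ℝ)) z j := rfl
      rw [h1]; ring
    have key : |(∑ j, w j * x j) - 1| ≤ Wq * dist X z := by
      rw [hXz, dist_eq_norm]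
      exact hHolder (X - z)
    rw [lt_div_iff₀ hWqpos] at hdz
    have hcomm : Wq * dist X z = dist X z * Wq := mul_comm _ _
    linarith [key, hdz]
  have hlamP : 0 < lam := by rw [hlamG]; positivity
  have hWlam : r * Wq = c * lam := by rw [hWqG, hlamG]; ring
  intro i s
  constructor
  · rintro ⟨hs0, hs1⟩
    have hsa : s - a i < -lam := by linarith
    constructor
    · rw [hS i s]; nlinarith
    · apply hdist
      rw [hS i s]
      have he : (1 + c * (s - a i)) - 1 = c * (s - a i) := by ring
      rw [he, abs_of_neg (by nlinarith : c * (s - a i) < 0)]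
      nlinarith
  · rintro ⟨hs0, hs1⟩
    have hsa : lam < s - a i := by linarith
    constructor
    · rw [hS i s]; nlinarith
    · apply hdist
      rw [hS i s]
      have he : (1 + c * (s - a i)) - 1 = c * (s - a i) := by ring
      rw [he, abs_of_pos (by nlinarith : 0 < c * (s - a i))]
      nlinarith
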